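/- Let R be a ring with identity and let S be a subring of R (containing the identity) which is strongly π-regular, i.e. for every x ∈ S the descending chain of left ideals Sx ⊇ Sx² ⊇ Sx³ ⊇ ... of S stabilizes. If x ∈ S is invertible in R, then x⁻¹ ∈ S. -/
import Mathlib


/-- A ring `S` is strongly π-regular if for every `x ∈ S` the descending chain of left
ideals `Sx ⊇ Sx² ⊇ ⋯` stabilizes; equivalently, for every `x ∈ S` there are `k ≥ 1`
and `s ∈ S` with `x ^ k = s * x ^ (k + 1)`. -/
def IsStronglyPiRegularRing (S : Type*) [Ring S] : Prop :=
  ∀ x : S, ∃ k : ℕ, 1 ≤ k ∧ ∃ s : S, x ^ k = s * x ^ (k + 1)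

/-- If `S` is a strongly π-regular subring of a ring `R` and `x ∈ S` is invertible
in `R`, then `x⁻¹ ∈ S`. -/
theorem stmt_0 {R : Type*} [Ring R] (S : Subring R)
    (hS : IsStronglyPiRegularRing S)
    (x : Rˣ) (hx : (x : R) ∈ S) :
    ((x⁻¹ : Rˣ) : R) ∈ S := by
  obtain ⟨k, hk, s, hs⟩ := hS ⟨(x : R), hx⟩
  have hR : (x : R) ^ k = (s : R) * (x : R) ^ (k + 1) := congrArg Subtype.val hs
  have key : ((x⁻¹ : Rˣ) : R) = (s : R) := by
    have := congrArg (· * ((x⁻¹ : Rˣ) : R) ^ (k + 1)) hR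
    simp only [mul_assoc] at this
    have h1 : (x : R) ^ (k + 1) * ((x⁻¹ : Rˣ) : R) ^ (k + 1) = 1 := by
      rw [← Units.val_pow_eq_pow_val, ← Units.val_pow_eq_pow_val, ← Units.val_mul,
        inv_pow, mul_inv_cancel, Units.val_one]
    have h2 : (x : R) ^ k * ((x⁻¹ : Rˣ) : R) ^ (k + 1) = ((x⁻¹ : Rˣ) : R) := by
      rw [pow_succ, ← mul_assoc, ← Units.val_pow_eq_pow_val, ← Units.val_pow_eq_pow_val,
        ← Units.val_mul, inv_pow, mul_inv_cancel, Units.val_one, one_mul]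
    rw [h1, mul_one, h2] at this
    exact this
  rw [key]; exact s.2
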